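/- Let E be a real inner product space, let T > 0 and κ ≥ 0, and let γ : ℝ → E be a twice continuously differentiable curve such that for all t ∈ [0, T] one has ‖γ(t)‖ = 1, ‖γ'(t)‖ = 1, and ‖γ''(t)‖ ≤ κ. Then for every t ∈ [0, T], ⟨γ(0), γ'(t)⟩ ≤ -t + κt²/2. -/

import Mathlib

open RealInnerProductSpace

theorem stmt_1 {E : Type*} [NormedAddCommGroup E] [InnerProductSpace ℝ E]
    (T κ : ℝ) (hT : 0 < T) (hκ : 0 ≤ κ) (γ : ℝ → E)
    (hγ : ContDiff ℝ 2 γ)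
    (hsphere : ∀ t ∈ Set.Icc (0 : ℝ) T, ‖γ t‖ = 1)
    (hspeed : ∀ t ∈ Set.Icc (0 : ℝ) T, ‖deriv γ t‖ = 1)
    (hcurv : ∀ t ∈ Set.Icc (0 : ℝ) T, ‖deriv (deriv γ) t‖ ≤ κ) :
    ∀ t ∈ Set.Icc (0 : ℝ) T, ⟪γ 0, deriv γ t⟫ ≤ -t + κ * t ^ 2 / 2 := by
  have hd1 : Differentiable ℝ γ := hγ.differentiable (by norm_num)
  have hγ1 : ContDiff ℝ 1 (deriv γ) :=
    (contDiff_succ_iff_deriv.mp (show ContDiff ℝ (1 + 1) γ by norm_num; exact hγ)).2.2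
  have hd2 : Differentiable ℝ (deriv γ) := hγ1.differentiable (by norm_num)
  have hc1 : Continuous (deriv γ) := hγ1.continuous
  have hc2 : Continuous (deriv (deriv γ)) :=
    ((contDiff_succ_iff_deriv.mp (show ContDiff ℝ (0 + 1) (deriv γ) by norm_num; exact hγ1)).2.2).continuous
  -- orthogonality
  have horth : ∀ s ∈ Set.Icc (0 : ℝ) T, ⟪γ s, deriv γ s⟫ = (0 : ℝ) := by
    have hcont : Continuous (fun s => (⟪γ s, deriv γ s⟫ : ℝ)) := hd1.continuous.inner hc1
    have hopen : Set.EqOn (fun s => (⟪γ s, deriv γ s⟫ : ℝ)) (fun _ => 0) (Set.Ioo 0 T) := by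
      intro s hs
      have hder : HasDerivAt (fun u => (⟪γ u, γ u⟫ : ℝ))
          (⟪γ s, deriv γ s⟫ + ⟪deriv γ s, γ s⟫) s :=
        ((hd1 s).hasDerivAt).inner ℝ ((hd1 s).hasDerivAt)
      have heq : (fun u => (⟪γ u, γ u⟫ : ℝ)) =ᶠ[nhds s] (fun _ => 1) := by
        filter_upwards [Ioo_mem_nhds hs.1 hs.2] with u hu
        have := hsphere u (Set.Ioo_subset_Icc_self hu)
        rw [real_inner_self_eq_norm_sq, this]; norm_num
      have hder' : HasDerivAt (fun _ : ℝ => (1 : ℝ))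
          (⟪γ s, deriv γ s⟫ + ⟪deriv γ s, γ s⟫) s := hder.congr_of_eventuallyEq heq.symm
      have hz : ⟪γ s, deriv γ s⟫ + ⟪deriv γ s, γ s⟫ = (0 : ℝ) :=
        hder'.unique (hasDerivAt_const s 1)
      have hcomm : (⟪deriv γ s, γ s⟫ : ℝ) = ⟪γ s, deriv γ s⟫ := real_inner_comm _ _
      simp only
      linarith
    have hcl := hopen.closure hcont continuous_const
    rw [closure_Ioo hT.ne] at hcl
    exact fun s hs => hcl hs
  intro t ht
  obtain ⟨ht0, htT⟩ := ht
  set v := deriv γ t with hv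
  have hvnorm : ‖v‖ = 1 := hspeed t ⟨ht0, htT⟩
  -- FTC for ⟪γ s, v⟫
  have hftc : ∫ s in (0:ℝ)..t, (⟪deriv γ s, v⟫ : ℝ) = ⟪γ t, v⟫ - ⟪γ 0, v⟫ := by
    apply intervalIntegral.integral_eq_sub_of_hasDerivAt
    · intro s _
      have := ((hd1 s).hasDerivAt).inner ℝ (hasDerivAt_const s v)
      simpa using this
    · exact (hc1.inner continuous_const).intervalIntegrable 0 t
  -- lower bound on ⟪deriv γ s, v⟫
  have hlow : ∀ s ∈ Set.Icc (0:ℝ) t, 1 - κ * (t - s) ≤ (⟪deriv γ s, v⟫ : ℝ) := by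
    intro s hs
    have hftc2 : ∫ u in s..t, (⟪deriv (deriv γ) u, v⟫ : ℝ) = ⟪deriv γ t, v⟫ - ⟪deriv γ s, v⟫ := by
      apply intervalIntegral.integral_eq_sub_of_hasDerivAt
      · intro u _
        have := ((hd2 u).hasDerivAt).inner ℝ (hasDerivAt_const u v)
        simpa using this
      · exact (hc2.inner continuous_const).intervalIntegrable s t
    have hbound : ‖∫ u in s..t, (⟪deriv (deriv γ) u, v⟫ : ℝ)‖ ≤ κ * |t - s| := by
      apply intervalIntegral.norm_integral_le_of_norm_le_const
      intro u hu
      have huI : u ∈ Set.Icc (0:ℝ) T := by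
        rcases hu with ⟨h1, h2⟩
        constructor
        · calc (0:ℝ) ≤ min s t := le_min hs.1 (le_trans hs.1 hs.2)
            _ ≤ u := le_of_lt h1
        · calc u ≤ max s t := h2
            _ ≤ T := max_le (le_trans hs.2 htT) htT
      calc ‖(⟪deriv (deriv γ) u, v⟫ : ℝ)‖ ≤ ‖deriv (deriv γ) u‖ * ‖v‖ := norm_inner_le_norm _ _
        _ ≤ κ * 1 := by
            apply mul_le_mul (hcurv u huI) (le_of_eq hvnorm) (norm_nonneg _) hκ
        _ = κ := mul_one κ
    have hvt : (⟪deriv γ t, v⟫ : ℝ) = 1 := by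
      rw [hv, real_inner_self_eq_norm_sq, hvnorm]; norm_num
    rw [hftc2, hvt] at hbound
    have habs : |t - s| = t - s := abs_of_nonneg (by linarith [hs.2])
    rw [Real.norm_eq_abs, habs] at hbound
    have := abs_le.mp hbound
    linarith [this.1, this.2]
  -- integral comparison
  have hcontk : Continuous (fun s => (⟪deriv γ s, v⟫ : ℝ)) := hc1.inner continuous_const
  have hmono : ∫ s in (0:ℝ)..t, (1 - κ * (t - s)) ≤ ∫ s in (0:ℝ)..t, (⟪deriv γ s, v⟫ : ℝ) := by
    apply intervalIntegral.integral_mono_on ht0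
    · exact ((continuous_const.sub (continuous_const.mul
        (continuous_const.sub continuous_id))).intervalIntegrable 0 t)
    · exact hcontk.intervalIntegrable 0 t
    · exact hlow
  have hcompute : ∫ s in (0:ℝ)..t, (1 - κ * (t - s)) = t - κ * t ^ 2 / 2 := by
    have hfun : (fun s : ℝ => 1 - κ * (t - s)) = fun s => (1 - κ * t) + κ * s := by
      funext s; ring
    rw [hfun, intervalIntegral.integral_add (intervalIntegrable_const)
      ((intervalIntegral.intervalIntegrable_id).const_mul κ),
      intervalIntegral.integral_const_mul, integral_id]
    simp
    ring
  have hgt : (⟪γ t, v⟫ : ℝ) = 0 := horth t ⟨ht0, htT⟩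
  rw [hgt] at hftc
  rw [hcompute] at hmono
  have : (⟪γ 0, v⟫ : ℝ) = -(∫ s in (0:ℝ)..t, (⟪deriv γ s, v⟫ : ℝ)) := by linarith
  rw [this]
  linarith
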